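/- Let I ⊆ R be a monomial ideal with linear quotients whose decomposition function b is regular, let m ∈ G(I), α ⊆ set(m) with |α| = p, and let σ be a permutation of α with ch(m,α,σ) nondegenerate, with vertex monomials m_0 = m, m_i = b(x_{σ_i} · m_{i−1}). Then the facet of ch(m,α,σ) obtained by omitting the first vertex m_0, and the facet obtained by omitting the last vertex m_p, are both exterior: neither is a facet of any nondegenerate simplex ch(m,α,σ′) with ch(m,α,σ′) ≠ ch(m,α,σ), where σ′ ranges over permutations of α. -/

import Mathlib

open MvPolynomial

/-- The monomial ideal generated by a set of exponent vectors. -/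
noncomputable def genIdeal (K : Type*) [Field K] {n : ℕ} (ms : Set (Fin n →₀ ℕ)) :
    Ideal (MvPolynomial (Fin n) K) :=
  Ideal.span ((fun u => MvPolynomial.monomial u (1 : K)) '' ms)

/-- The colon ideal `⟨m_1, …, m_{j-1}⟩ : m_j`. -/
noncomputable def colonJ (K : Type*) [Field K] {n k : ℕ} (m : Fin k → (Fin n →₀ ℕ))
    (j : Fin k) : Ideal (MvPolynomial (Fin n) K) :=
  Submodule.colon (genIdeal K {u | ∃ i : Fin k, i < j ∧ u = m i})
    (Ideal.span {MvPolynomial.monomial (m j) (1 : K)})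

/-- `I` has linear quotients w.r.t. the ordering `m_1,…,m_k` of its generators:
each colon ideal is generated by a subset of the variables. -/
def HasLinearQuotients (K : Type*) [Field K] {n k : ℕ}
    (m : Fin k → (Fin n →₀ ℕ)) : Prop :=
  ∀ j : Fin k, ∃ S : Set (Fin n),
    colonJ K m j = Ideal.span ((fun s => (MvPolynomial.X s : MvPolynomial (Fin n) K)) '' S)

/-- `set(m_j) = {i : x_i ∈ ⟨m_1,…,m_{j-1}⟩ : m_j}`. -/
def mset (K : Type*) [Field K] {n k : ℕ} (m : Fin k → (Fin n →₀ ℕ)) (j : Fin k) :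
    Set (Fin n) :=
  {t | (MvPolynomial.X t : MvPolynomial (Fin n) K) ∈ colonJ K m j}

/-- The `m i` are minimal monomial generators: none divides another. -/
def MinimalGens {n k : ℕ} (m : Fin k → (Fin n →₀ ℕ)) : Prop :=
  ∀ i j : Fin k, m i ≤ m j → i = j

/-- `b` is the decomposition function: for a monomial `u ∈ I`, `b u` is the smallest
index `j` with `u ∈ ⟨m_1,…,m_j⟩`. -/
def IsDecompositionFunction (K : Type*) [Field K] {n k : ℕ}
    (m : Fin k → (Fin n →₀ ℕ)) (b : (Fin n →₀ ℕ) → Fin k) : Prop :=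
  ∀ u : Fin n →₀ ℕ, MvPolynomial.monomial u (1 : K) ∈ genIdeal K (Set.range m) →
    (MvPolynomial.monomial u (1 : K) ∈ genIdeal K {v | ∃ i : Fin k, i ≤ b u ∧ v = m i}) ∧
    (∀ j : Fin k,
      MvPolynomial.monomial u (1 : K) ∈ genIdeal K {v | ∃ i : Fin k, i ≤ j ∧ v = m i} →
      b u ≤ j)

/-- The decomposition function is regular: `set(b(x_t·m)) ⊆ set(m)` for every
generator `m` and every `t ∈ set(m)`. -/
def IsRegularDecomp (K : Type*) [Field K] {n k : ℕ}
    (m : Fin k → (Fin n →₀ ℕ)) (b : (Fin n →₀ ℕ) → Fin k) : Prop :=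
  ∀ j : Fin k, ∀ t ∈ mset K m j,
    mset K m (b (m j + Finsupp.single t 1)) ⊆ mset K m j

/-- The sequence of vertex monomials `m_0 = m₀`, `m_{i+1} = b(x_{σ(i)} · m_i)` of the
simplex `ch(m, α, σ)` (here `σ` is 0-indexed: `σ 0, …, σ (p-1)` is the permutation). -/
noncomputable def chainSeq {n k : ℕ} (m : Fin k → (Fin n →₀ ℕ)) (b : (Fin n →₀ ℕ) → Fin k)
    (m0 : Fin n →₀ ℕ) (σ : ℕ → Fin n) : ℕ → (Fin n →₀ ℕ)
  | 0 => m0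
  | i + 1 => m (b (chainSeq m b m0 σ i + Finsupp.single (σ i) 1))

/-- `σ 0, …, σ (p-1)` is a permutation (an ordering) of the finite set `α`. -/
def PermOf {n : ℕ} (σ : ℕ → Fin n) (p : ℕ) (α : Finset (Fin n)) : Prop :=
  Set.InjOn σ (Set.Iio p) ∧ ∀ a : Fin n, a ∈ α ↔ ∃ i < p, σ i = a

/-- `ch(m,α,σ)` is nondegenerate: the vertex monomials `m_0, …, m_p` are pairwise
distinct. -/
def Nondeg {n k : ℕ} (m : Fin k → (Fin n →₀ ℕ)) (b : (Fin n →₀ ℕ) → Fin k)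
    (m0 : Fin n →₀ ℕ) (σ : ℕ → Fin n) (p : ℕ) : Prop :=
  Set.InjOn (chainSeq m b m0 σ) (Set.Iic p)

/-- A monomial (exponent vector) regarded as a point of `ℝⁿ`. -/
def toR {n : ℕ} (u : Fin n →₀ ℕ) : Fin n → ℝ := fun a => (u a : ℝ)

/-- The set of vertex monomials of `ch(m,α,σ)`. -/
def vertSet {n k : ℕ} (m : Fin k → (Fin n →₀ ℕ)) (b : (Fin n →₀ ℕ) → Fin k)
    (m0 : Fin n →₀ ℕ) (σ : ℕ → Fin n) (p : ℕ) : Set (Fin n →₀ ℕ) :=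
  {v | ∃ i ≤ p, v = chainSeq m b m0 σ i}

/-- `F` (a set of vertex monomials) is a facet of the simplex `ch(m,α,τ)`: it is
obtained from the vertex set by removing exactly one vertex. -/
def IsFacetOf {n k : ℕ} (m : Fin k → (Fin n →₀ ℕ)) (b : (Fin n →₀ ℕ) → Fin k)
    (m0 : Fin n →₀ ℕ) (τ : ℕ → Fin n) (p : ℕ) (F : Set (Fin n →₀ ℕ)) : Prop :=
  ∃ i ≤ p, F = vertSet m b m0 τ p \ {chainSeq m b m0 τ i}


section Aux

variable {K : Type*} [Field K] {n k : ℕ}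

theorem memGen_iff (ms : Set (Fin n →₀ ℕ)) (u : Fin n →₀ ℕ) :
    MvPolynomial.monomial u (1 : K) ∈ genIdeal K ms ↔ ∃ v ∈ ms, v ≤ u := by
  rw [genIdeal, MvPolynomial.mem_ideal_span_monomial_image]
  simp [MvPolynomial.support_monomial]

theorem mem_colonJ_iff (m : Fin k → (Fin n →₀ ℕ)) (q : Fin k) (w : Fin n →₀ ℕ) :
    MvPolynomial.monomial w (1 : K) ∈ colonJ K m q ↔ ∃ i < q, m i ≤ w + m q := by
  rw [colonJ, ← Ideal.submodule_span_eq, Submodule.mem_colon_span_singleton, smul_eq_mul,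
    MvPolynomial.monomial_mul, mul_one, memGen_iff]
  constructor
  · rintro ⟨v, ⟨i, hi, rfl⟩, hv⟩; exact ⟨i, hi, hv⟩
  · rintro ⟨i, hi, hv⟩; exact ⟨m i, ⟨i, hi, rfl⟩, hv⟩

theorem mem_mset_iff (m : Fin k → (Fin n →₀ ℕ)) (q : Fin k) (t : Fin n) :
    t ∈ mset K m q ↔ ∃ i < q, m i ≤ m q + Finsupp.single t 1 := by
  have hX : (MvPolynomial.X t : MvPolynomial (Fin n) K)
      = MvPolynomial.monomial (Finsupp.single t 1) 1 := rfl
  rw [mset, Set.mem_setOf_eq, hX, mem_colonJ_iff]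
  simp_rw [add_comm (Finsupp.single t 1) (m q)]

theorem colon_var {m : Fin k → (Fin n →₀ ℕ)} (hlq : HasLinearQuotients K m) (q : Fin k)
    (w : Fin n →₀ ℕ) (hw : MvPolynomial.monomial w (1 : K) ∈ colonJ K m q) :
    ∃ r ∈ mset K m q, w r ≠ 0 := by
  obtain ⟨S, hS⟩ := hlq q
  rw [hS, MvPolynomial.mem_ideal_span_X_image] at hw
  have hsupp : w ∈ (MvPolynomial.monomial w (1 : K)).support := by
    simp [MvPolynomial.support_monomial]
  obtain ⟨r, hrS, hr⟩ := hw w hsupp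
  refine ⟨r, ?_, hr⟩
  show MvPolynomial.X r ∈ colonJ K m q
  rw [hS]
  exact Ideal.subset_span ⟨r, hrS, rfl⟩

theorem exists_var {m : Fin k → (Fin n →₀ ℕ)} (hlq : HasLinearQuotients K m)
    {q c : Fin k} (hc : c < q) {h : Fin n →₀ ℕ} (hle : m c ≤ m q + h) :
    ∃ r ∈ mset K m q, h r ≠ 0 := by
  apply colon_var hlq q h
  rw [mem_colonJ_iff]
  exact ⟨c, hc, by rwa [add_comm]⟩

theorem b_min {m : Fin k → (Fin n →₀ ℕ)} {b : (Fin n →₀ ℕ) → Fin k}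
    (hb : IsDecompositionFunction K m b) {v : Fin n →₀ ℕ} :
    ∀ i, m i ≤ v → b v ≤ i := by
  intro i hi
  have hvI : MvPolynomial.monomial v (1 : K) ∈ genIdeal K (Set.range m) :=
    (memGen_iff _ _).2 ⟨m i, ⟨i, rfl⟩, hi⟩
  exact (hb v hvI).2 i ((memGen_iff _ _).2 ⟨m i, ⟨i, le_rfl, rfl⟩, hi⟩)

theorem b_div {m : Fin k → (Fin n →₀ ℕ)} {b : (Fin n →₀ ℕ) → Fin k}
    (hb : IsDecompositionFunction K m b) {v : Fin n →₀ ℕ} (hv : ∃ i, m i ≤ v) :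
    m (b v) ≤ v := by
  obtain ⟨i0, hi0⟩ := hv
  have hvI : MvPolynomial.monomial v (1 : K) ∈ genIdeal K (Set.range m) :=
    (memGen_iff _ _).2 ⟨m i0, ⟨i0, rfl⟩, hi0⟩
  obtain ⟨v', ⟨i, hib, rfl⟩, hle⟩ := (memGen_iff _ _).1 (hb v hvI).1
  have hieq : i = b v := le_antisymm hib (b_min (K := K) hb i hle)
  rwa [hieq] at hle

/-- The key Herzog–Takayama style lemma: applying `b` after adding a variable to `v`
is the same as adding the variable to the generator `m (b v)`. -/
theorem bstep {m : Fin k → (Fin n →₀ ℕ)} {b : (Fin n →₀ ℕ) → Fin k}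
    (hlq : HasLinearQuotients K m) (hb : IsDecompositionFunction K m b)
    (hreg : IsRegularDecomp K m b)
    (v : Fin n →₀ ℕ) (hv : ∃ i, m i ≤ v) (s : Fin n) :
    b (v + Finsupp.single s 1) = b (m (b v) + Finsupp.single s 1) := by
  set q := b v with hq
  have hqv : m q ≤ v := b_div (K := K) hb hv
  set e : Fin n →₀ ℕ := Finsupp.single s 1 with he
  have hGI : ∃ i, m i ≤ m q + e := ⟨q, le_add_right le_rfl⟩
  have hvsI : ∃ i, m i ≤ v + e := ⟨q, le_add_right hqv⟩
  set c := b (v + e) with hc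
  set c' := b (m q + e) with hc'
  have hcc' : c ≤ c' :=
    b_min (K := K) hb _ (le_trans (b_div (K := K) hb hGI) (add_le_add_left hqv e))
  refine le_antisymm hcc' ?_
  by_contra hlt
  push_neg at hlt
  have hcq : c < q := lt_of_lt_of_le hlt (b_min (K := K) hb _ (le_add_right le_rfl))
  set h : Fin n →₀ ℕ := v - m q with hh
  have hvh : m q + h = v := add_tsub_cancel_of_le hqv
  -- any variable of `mset q` occurring in `h` gives a contradiction
  have hkey : ∀ r' ∈ mset K m q, h r' = 0 := by
    intro r' hr'
    by_contra hne
    obtain ⟨i, hiq, hile⟩ := (mem_mset_iff m q r').1 hr'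
    have hsle : Finsupp.single r' 1 ≤ h := by
      rw [Finsupp.single_le_iff]
      exact Nat.one_le_iff_ne_zero.2 hne
    have hiv : m i ≤ v := by
      calc m i ≤ m q + Finsupp.single r' 1 := hile
        _ ≤ m q + h := add_le_add_right hsle _
        _ = v := hvh
    exact absurd (lt_of_le_of_lt (b_min (K := K) hb i hiv) hiq) (lt_irrefl q)
  -- first application of linear quotients
  have h1 : m c ≤ m q + (h + e) := by
    have hmc : m c ≤ v + e := b_div (K := K) hb hvsI
    rwa [← hvh, add_assoc] at hmc
  obtain ⟨r, hrq, hre⟩ := exists_var hlq hcq h1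
  have hrs : r = s := by
    rcases Finsupp.add_apply h e r ▸ hre with hre'
    have h0 : h r = 0 := hkey r hrq
    rw [h0, zero_add, he, Finsupp.single_apply] at hre'
    by_contra hne
    simp [Ne.symm hne] at hre'
  have hsq : s ∈ mset K m q := hrs ▸ hrq
  -- second application, at c'
  have hgle : m c' ≤ m q + e := b_div (K := K) hb hGI
  set h' : Fin n →₀ ℕ := (m q + e - m c') + h with hh'
  have h2 : m c ≤ m c' + h' := by
    have hmc : m c ≤ v + e := b_div (K := K) hb hvsI
    have : m c' + h' = v + e := by
      rw [hh', ← add_assoc, add_tsub_cancel_of_le hgle, ← hvh]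
      exact add_right_comm _ _ _
    rwa [this]
  obtain ⟨r', hrc', hre'⟩ := exists_var hlq hlt h2
  have hrq' : r' ∈ mset K m q := hreg q s hsq hrc'
  have h0' : h r' = 0 := hkey r' hrq'
  have hsub : (m q + e - m c') r' ≠ 0 := by
    rw [hh'] at hre'
    rwa [Finsupp.add_apply, h0', add_zero] at hre'
  obtain ⟨i, hic', hile⟩ := (mem_mset_iff m c' r').1 hrc'
  have hsle : Finsupp.single r' 1 ≤ m q + e - m c' := by
    rw [Finsupp.single_le_iff]
    exact Nat.one_le_iff_ne_zero.2 hsub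
  have hiG : m i ≤ m q + e := by
    calc m i ≤ m c' + Finsupp.single r' 1 := hile
      _ ≤ m c' + (m q + e - m c') := add_le_add_right hsle _
      _ = m q + e := add_tsub_cancel_of_le hgle
  exact absurd (lt_of_le_of_lt (b_min (K := K) hb i hiG) hic') (lt_irrefl c')

theorem chain_formula {m : Fin k → (Fin n →₀ ℕ)} {b : (Fin n →₀ ℕ) → Fin k}
    (hmin : MinimalGens m) (hlq : HasLinearQuotients K m)
    (hb : IsDecompositionFunction K m b) (hreg : IsRegularDecomp K m b)
    (j : Fin k) (σ : ℕ → Fin n) (i : ℕ) :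
    chainSeq m b (m j) σ i
      = m (b (m j + ∑ l ∈ Finset.range i, Finsupp.single (σ l) 1)) := by
  induction i with
  | zero =>
    have h1 : b (m j) = j := hmin _ _ (b_div (K := K) hb ⟨j, le_rfl⟩)
    simp only [Finset.range_zero, Finset.sum_empty, add_zero, h1]
    rfl
  | succ i ih =>
    show m (b (chainSeq m b (m j) σ i + Finsupp.single (σ i) 1)) = _
    rw [ih, ← bstep (K := K) hlq hb hreg _ ⟨j, le_add_right le_rfl⟩ (σ i),
      Finset.sum_range_succ, ← add_assoc]

theorem sum_perm {σ : ℕ → Fin n} {p : ℕ} {α : Finset (Fin n)} (hσ : PermOf σ p α) :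
    ∑ l ∈ Finset.range p, Finsupp.single (σ l) (1 : ℕ) = ∑ a ∈ α, Finsupp.single a (1 : ℕ) := by
  refine Finset.sum_bij (fun l _ => σ l) ?_ ?_ ?_ ?_
  · intro l hl; exact (hσ.2 (σ l)).2 ⟨l, Finset.mem_range.1 hl, rfl⟩
  · intro l hl l' hl' hEq
    exact hσ.1 (Set.mem_Iio.2 (Finset.mem_range.1 hl)) (Set.mem_Iio.2 (Finset.mem_range.1 hl')) hEq
  · intro a ha
    obtain ⟨l, hl, hEq⟩ := (hσ.2 a).1 ha
    exact ⟨l, Finset.mem_range.2 hl, hEq⟩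
  · intro l hl; rfl

theorem last_eq {m : Fin k → (Fin n →₀ ℕ)} {b : (Fin n →₀ ℕ) → Fin k}
    (hmin : MinimalGens m) (hlq : HasLinearQuotients K m)
    (hb : IsDecompositionFunction K m b) (hreg : IsRegularDecomp K m b)
    (j : Fin k) {σ σ' : ℕ → Fin n} {p : ℕ} {α : Finset (Fin n)}
    (hσ : PermOf σ p α) (hσ' : PermOf σ' p α) :
    chainSeq m b (m j) σ p = chainSeq m b (m j) σ' p := by
  rw [chain_formula (K := K) hmin hlq hb hreg j σ p,
    chain_formula (K := K) hmin hlq hb hreg j σ' p, sum_perm hσ, ← sum_perm hσ']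

end Aux

/-- for a nondegenerate `ch(m,α,σ)`, the facet obtained by omitting the
first vertex `m_0` and the facet obtained by omitting the last vertex `m_p` are both
exterior: neither is a facet of any nondegenerate simplex `ch(m,α,σ')` different from
`ch(m,α,σ)`. -/
theorem stmt6 (K : Type*) [Field K] {n k : ℕ} (m : Fin k → (Fin n →₀ ℕ))
    (hmin : MinimalGens m) (hlq : HasLinearQuotients K m)
    (b : (Fin n →₀ ℕ) → Fin k) (hb : IsDecompositionFunction K m b)
    (hreg : IsRegularDecomp K m b)
    (j : Fin k) (α : Finset (Fin n)) (hα : ↑α ⊆ mset K m j)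
    (p : ℕ) (hcard : α.card = p)
    (σ : ℕ → Fin n) (hσ : PermOf σ p α)
    (hnd : Nondeg m b (m j) σ p) :
    ∀ σ' : ℕ → Fin n, PermOf σ' p α → Nondeg m b (m j) σ' p →
      vertSet m b (m j) σ' p ≠ vertSet m b (m j) σ p →
      (¬ IsFacetOf m b (m j) σ' p
          (vertSet m b (m j) σ p \ {chainSeq m b (m j) σ 0})) ∧
      (¬ IsFacetOf m b (m j) σ' p
          (vertSet m b (m j) σ p \ {chainSeq m b (m j) σ p})) := by
  intro σ' hσ' hnd' hne
  have hlast : chainSeq m b (m j) σ' p = chainSeq m b (m j) σ p :=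
    last_eq (K := K) hmin hlq hb hreg j hσ' hσ
  have hmem0 : m j ∈ vertSet m b (m j) σ' p := ⟨0, Nat.zero_le p, rfl⟩
  have hmem0' : m j ∈ vertSet m b (m j) σ p := ⟨0, Nat.zero_le p, rfl⟩
  have hmemp : chainSeq m b (m j) σ p ∈ vertSet m b (m j) σ' p :=
    ⟨p, le_rfl, hlast.symm⟩
  have hmemp' : chainSeq m b (m j) σ p ∈ vertSet m b (m j) σ p := ⟨p, le_rfl, rfl⟩
  have key : ∀ x : Fin n →₀ ℕ, x ∈ vertSet m b (m j) σ p → x ∈ vertSet m b (m j) σ' p →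
      ¬ IsFacetOf m b (m j) σ' p (vertSet m b (m j) σ p \ {x}) := by
    intro x hxV hxV' ⟨i, hip, hF⟩
    by_cases hcase : chainSeq m b (m j) σ' i = x
    · apply hne
      have e1 : vertSet m b (m j) σ p \ {x} ∪ {x} = vertSet m b (m j) σ p :=
        Set.diff_union_of_subset (Set.singleton_subset_iff.2 hxV)
      have e2 : vertSet m b (m j) σ' p \ {chainSeq m b (m j) σ' i}
          ∪ {chainSeq m b (m j) σ' i} = vertSet m b (m j) σ' p :=
        Set.diff_union_of_subset (Set.singleton_subset_iff.2 ⟨i, hip, rfl⟩)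
      calc vertSet m b (m j) σ' p
          = vertSet m b (m j) σ' p \ {chainSeq m b (m j) σ' i}
            ∪ {chainSeq m b (m j) σ' i} := e2.symm
        _ = vertSet m b (m j) σ p \ {x} ∪ {x} := by rw [← hF, hcase]
        _ = vertSet m b (m j) σ p := e1
    · have : x ∈ vertSet m b (m j) σ' p \ {chainSeq m b (m j) σ' i} :=
        ⟨hxV', fun hx => hcase (Set.mem_singleton_iff.1 hx).symm⟩
      rw [← hF] at this
      exact this.2 rfl
  exact ⟨key (chainSeq m b (m j) σ 0) hmem0' hmem0,
    key (chainSeq m b (m j) σ p) hmemp' hmemp⟩
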